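/- If a polynomial f(x) = Σ_{i=0}^n f_i x^i with nonnegative coefficients is symmetric (f_i = f_{n-i} for all i) and has only real (necessarily negative or zero) zeros, then f is γ-positive, i.e., writing f(x) = Σ_{k=0}^{⌊n/2⌋} γ_k x^k (1+x)^{n-2k}, all γ_k are nonnegative. -/

import Mathlib

open Polynomial

lemma my_quad (r : ℝ) (hr : 0 < r) :
    (X + C r) * (X + C r⁻¹) = (1 + X)^2 + C (r + r⁻¹ - 2) * (X : ℝ[X]) := by
  have h1 : C r * C r⁻¹ = (1 : ℝ[X]) := by
    rw [← C_mul, mul_inv_cancel₀ hr.ne', C_1]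
  have hb : C (r + r⁻¹ - 2) = C r + C r⁻¹ - 2 := by
    rw [C_sub, C_add, map_ofNat]
  rw [hb]
  linear_combination h1

lemma my_rev_X_add_C (a : ℝ) (ha : a ≠ 0) :
    (X + C a).reverse = C a * (X + C a⁻¹) := by
  have h : (X + C a) = C a * X^0 + C 1 * X^1 := by simp [add_comm]
  rw [reverse, natDegree_X_add_C, h, reflect_add, reflect_C_mul_X_pow, reflect_C_mul_X_pow]
  have h0 : revAt 1 0 = 1 := revAt_le (by norm_num)
  have h1 : revAt 1 1 = 0 := revAt_le (le_refl 1)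
  rw [h0, h1]
  rw [mul_add, ← C_mul, mul_inv_cancel₀ ha, C_1]
  ring

lemma my_rev_prod (t : Multiset ℝ) (ht : ∀ r ∈ t, 0 < r) :
    (t.map (fun r => X + C r)).prod.reverse
      = C t.prod * (t.map (fun r => X + C r⁻¹)).prod := by
  induction t using Multiset.induction_on with
  | empty => rw [Multiset.map_zero, Multiset.prod_zero, ← C_1, reverse_C]; simp
  | cons a s IH =>
    have ha : 0 < a := ht a (Multiset.mem_cons_self a s)
    have hs : ∀ r ∈ s, 0 < r := fun r hr => ht r (Multiset.mem_cons_of_mem hr)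
    simp only [Multiset.map_cons, Multiset.prod_cons]
    rw [reverse_mul_of_domain, IH hs, my_rev_X_add_C a ha.ne', C_mul]
    ring

lemma my_key : ∀ m : ℕ, ∀ t : Multiset ℝ, Multiset.card t = m → ∀ c : ℝ, 0 ≤ c →
    (∀ r ∈ t, 0 < r) → t.map (·⁻¹) = t →
    ∃ γ : ℕ → ℝ, (∀ k, 0 ≤ γ k) ∧ (∀ k, m / 2 < k → γ k = 0) ∧
      C c * (t.map (fun r => X + C r)).prod
        = ∑ k ∈ Finset.range (m / 2 + 1), C (γ k) * X ^ k * (1 + X) ^ (m - 2 * k) := by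
  intro m
  induction m using Nat.strong_induction_on with
  | _ m IH =>
  intro t hcard c hc ht hinv
  by_cases hall : ∀ r ∈ t, r = (1:ℝ)
  · -- all roots equal 1
    have htr : t = Multiset.replicate m 1 := by
      rw [← hcard]; exact Multiset.eq_replicate_card.mpr hall
    refine ⟨fun k => if k = 0 then c else 0, ?_, ?_, ?_⟩
    · intro k; dsimp only; split
      · exact hc
      · exact le_refl 0
    · intro k hk; exact if_neg (by omega)
    · rw [htr, Multiset.map_replicate, Multiset.prod_replicate]
      rw [Finset.sum_eq_single_of_mem 0 (Finset.mem_range.mpr (by omega))]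
      · simp [add_comm]
      · intro b _ hb; simp [hb]
  · push_neg at hall
    obtain ⟨r, hrt, hrne⟩ := hall
    have hr : 0 < r := ht r hrt
    have hrinvt : r⁻¹ ∈ t := by
      rw [← hinv]; exact Multiset.mem_map_of_mem _ hrt
    have hne : r⁻¹ ≠ r := by
      intro h
      have h2 : r * r = 1 := by
        nth_rewrite 2 [← h]; exact mul_inv_cancel₀ hr.ne'
      have h3 : (r - 1) * (r + 1) = 0 := by linear_combination h2
      rcases mul_eq_zero.mp h3 with h4 | h4
      · exact hrne (by linarith)
      · linarith
    have h1 : r⁻¹ ∈ t.erase r := (Multiset.mem_erase_of_ne hne).mpr hrinvt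
    set t' := (t.erase r).erase r⁻¹ with ht'def
    have htt : t = r ::ₘ r⁻¹ ::ₘ t' := by
      rw [ht'def, Multiset.cons_erase h1, Multiset.cons_erase hrt]
    have hm : m = Multiset.card t' + 2 := by
      rw [← hcard, htt]; simp
    set m' := Multiset.card t' with hm'def
    have ht'pos : ∀ s ∈ t', 0 < s := by
      intro s hs
      exact ht s (by rw [htt]; exact Multiset.mem_cons_of_mem (Multiset.mem_cons_of_mem hs))
    have hinv' : t'.map (·⁻¹) = t' := by
      have h := hinv
      rw [htt] at h
      simp only [Multiset.map_cons, inv_inv] at h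
      rw [Multiset.cons_swap] at h
      exact (Multiset.cons_inj_right _).mp ((Multiset.cons_inj_right _).mp h)
    obtain ⟨γ, hγ0, hγs, heq⟩ := IH m' (by omega) t' rfl c hc ht'pos hinv'
    set b := r + r⁻¹ - 2 with hbdef
    have hb : 0 ≤ b := by
      have h2 : r * r⁻¹ = 1 := mul_inv_cancel₀ hr.ne'
      rw [hbdef]; nlinarith [sq_nonneg (r - 1)]
    refine ⟨fun k => γ k + b * (if k = 0 then 0 else γ (k-1)), ?_, ?_, ?_⟩
    · intro k; dsimp only
      have := hγ0 k
      split
      · simpa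
      · have := hγ0 (k-1); positivity
    · intro k hk; dsimp only
      rw [hγs k (by omega), if_neg (by omega), hγs (k-1) (by omega)]
      ring
    · have hm2 : m / 2 = m' / 2 + 1 := by omega
      rw [htt]
      simp only [Multiset.map_cons, Multiset.prod_cons]
      have lhs_eq : C c * ((X + C r) * ((X + C r⁻¹) * (t'.map fun s => X + C s).prod))
          = ((1+X)^2 + C b * X) * (C c * (t'.map fun s => X + C s).prod) := by
        rw [← my_quad r hr]; ring
      rw [lhs_eq, heq, Finset.mul_sum, hm2]
      have rhs_split : ∑ k ∈ Finset.range (m'/2+1+1),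
            C (γ k + b * (if k = 0 then 0 else γ (k-1))) * X^k * (1+X)^(m-2*k)
          = (∑ k ∈ Finset.range (m'/2+1), C (γ k) * X^k * (1+X)^(m-2*k))
            + ∑ k ∈ Finset.range (m'/2+1), C (b * γ k) * X^(k+1) * (1+X)^(m-2*(k+1)) := by
        have hterm : ∀ k, C (γ k + b * (if k = 0 then 0 else γ (k-1))) * X^k * (1+X)^(m-2*k)
            = C (γ k) * X^k * (1+X)^(m-2*k)
              + C (b * (if k = 0 then 0 else γ (k-1))) * X^k * (1+X)^(m-2*k) := by
          intro k; rw [C_add]; ring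
        rw [Finset.sum_congr rfl (fun k _ => hterm k), Finset.sum_add_distrib]
        congr 1
        · rw [Finset.sum_range_succ, hγs (m'/2+1) (by omega), C_0, zero_mul, zero_mul, add_zero]
        · rw [Finset.sum_range_succ']
          simp
      rw [rhs_split, ← Finset.sum_add_distrib]
      apply Finset.sum_congr rfl
      intro k hk
      have hk' : k ≤ m' / 2 := by
        have := Finset.mem_range.mp hk; omega
      have e1 : m - 2*k = (m' - 2*k) + 2 := by omega
      have e2 : m - 2*(k+1) = m' - 2*k := by omega
      rw [e1, e2, pow_add, C_mul]
      ring

/-- A symmetric polynomial with nonnegative coefficients having only real zeros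
is γ-positive. -/
theorem stmt1 (n : ℕ) (f : Polynomial ℝ) (hdeg : f.natDegree = n)
    (hnonneg : ∀ i, 0 ≤ f.coeff i)
    (hsym : ∀ i ≤ n, f.coeff i = f.coeff (n - i))
    (hreal : ∀ z : ℂ, (f.map (algebraMap ℝ ℂ)).IsRoot z → z.im = 0) :
    ∃ γ : ℕ → ℝ, (∀ k, 0 ≤ γ k) ∧
      f = ∑ k ∈ Finset.range (n / 2 + 1), C (γ k) * X ^ k * (1 + X) ^ (n - 2 * k) := by
  by_cases hf : f = 0
  · subst hf
    have hn : n = 0 := by simpa using hdeg.symm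
    subst hn
    exact ⟨fun _ => 0, fun k => le_refl 0, by simp⟩
  set φ := algebraMap ℝ ℂ with hφ
  have hφinj : Function.Injective φ := φ.injective
  -- leading coefficient
  have hlc : f.coeff n = f.leadingCoeff := by rw [← hdeg]; rfl
  have hc0 : 0 < f.leadingCoeff :=
    lt_of_le_of_ne (hlc ▸ hnonneg n) (Ne.symm (leadingCoeff_ne_zero.mpr hf))
  -- complex factorization
  have hsplC : Splits (f.map φ) := IsAlgClosed.splits _
  have hfacC := hsplC.eq_prod_roots
  rw [leadingCoeff_map] at hfacC
  set R := (f.map φ).roots with hR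
  have hRreal : ∀ z ∈ R, ((z.re : ℝ) : ℂ) = z := by
    intro z hz
    have him : z.im = 0 := hreal z (isRoot_of_mem_roots hz)
    exact Complex.ext (Complex.ofReal_re _) (by rw [Complex.ofReal_im, him])
  set s : Multiset ℝ := R.map Complex.re with hs
  have hsR : s.map (fun x : ℝ => (x : ℂ)) = R := by
    rw [hs, Multiset.map_map]
    exact (Multiset.map_congr rfl (fun z hz => hRreal z hz)).trans (Multiset.map_id R)
  -- real factorization
  have hfac : f = C f.leadingCoeff * (s.map (fun a => X - C a)).prod := by
    apply map_injective φ hφinj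
    rw [Polynomial.map_mul, map_C, hfacC, ← hsR, Multiset.map_map]
    congr 1
    rw [← Polynomial.coe_mapRingHom, map_multiset_prod, hs]
    simp only [Multiset.map_map]
    apply congrArg
    apply Multiset.map_congr rfl
    intro x _
    simp [hφ]
  -- card
  have hcard : Multiset.card s = n := by
    have h1 : Multiset.card R = (f.map φ).natDegree :=
      (splits_iff_card_roots.mp hsplC)
    rw [hs, Multiset.card_map, h1, natDegree_map, hdeg]
  -- roots are negative
  have hneg : ∀ x ∈ s, x < 0 := by
    intro x hx
    have hroot : f.eval x = 0 := by
      apply hφinj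
      rw [map_zero, ← eval₂_at_apply, ← eval_map]
      obtain ⟨z, hz, hzx⟩ := Multiset.mem_map.mp hx
      have : φ x = z := by rw [← hzx]; exact hRreal z hz
      rw [this]
      exact isRoot_of_mem_roots hz
    by_contra hxn
    push_neg at hxn
    rcases eq_or_lt_of_le hxn with h | h
    · -- x = 0
      have h0 : f.coeff 0 = 0 := by
        rw [← h] at hroot
        rw [coeff_zero_eq_eval_zero]
        exact hroot
      have := hsym 0 (Nat.zero_le n)
      simp only [Nat.sub_zero] at this
      rw [h0] at this
      exact absurd (hlc ▸ this.symm) hc0.ne'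
    · -- x > 0
      have hpos : 0 < f.eval x := by
        rw [eval_eq_sum_range]
        apply Finset.sum_pos' (fun i _ => mul_nonneg (hnonneg i) (le_of_lt (pow_pos h i)))
        exact ⟨f.natDegree, Finset.mem_range.mpr (by omega),
          mul_pos (by rw [hdeg, hlc]; exact hc0) (pow_pos h _)⟩
      rw [hroot] at hpos; exact lt_irrefl 0 hpos
  -- the multiset of (negated) roots
  obtain ⟨t, hst⟩ : ∃ t : Multiset ℝ, s = t.map (fun x => -x) :=
    ⟨s.map (fun x => -x), by rw [Multiset.map_map]; simp [Multiset.map_id']⟩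
  have htpos : ∀ r ∈ t, 0 < r := by
    intro r hrt
    have : -r ∈ s := by rw [hst]; exact Multiset.mem_map_of_mem _ hrt
    have := hneg _ this
    linarith
  have htcard : Multiset.card t = n := by
    rw [hst, Multiset.card_map] at hcard; exact hcard
  have hmapeq : (t.map (fun r => -r)).map (fun a => X - C a) = t.map (fun r => X + C r) := by
    rw [Multiset.map_map]
    apply Multiset.map_congr rfl
    intro x _
    simp [sub_neg_eq_add]
  have hmapeq2 : (t.map (fun r => -r⁻¹)).map (fun a => X - C a)
      = t.map (fun r => X + C r⁻¹) := by
    rw [Multiset.map_map]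
    apply Multiset.map_congr rfl
    intro x _
    simp [sub_neg_eq_add]
  -- factorization with X + C r
  have hfact : f = C f.leadingCoeff * (t.map (fun r => X + C r)).prod := by
    conv_lhs => rw [hfac, hst, hmapeq]
  -- f is self-reversed
  have hrev : f.reverse = f := by
    ext i
    rw [coeff_reverse, hdeg]
    rcases le_or_gt i n with h | h
    · rw [revAt_le h, ← hsym i h]
    · rw [revAt_eq_self_of_lt h]
  -- second factorization via reversal
  have htprodpos : 0 < t.prod := Multiset.prod_pos htpos
  have hfact2 : f = C (f.leadingCoeff * t.prod) * (t.map (fun r => X + C r⁻¹)).prod := by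
    conv_lhs => rw [← hrev]
    nth_rewrite 1 [hfact]
    rw [reverse_mul_of_domain, reverse_C, my_rev_prod t htpos, C_mul]
    ring
  -- compare roots to get inversion invariance
  have rootsA : f.roots = t.map (fun r => -r) := by
    nth_rewrite 1 [hfact]
    rw [roots_C_mul _ hc0.ne', ← hmapeq, roots_multiset_prod_X_sub_C]
  have rootsB : f.roots = t.map (fun r => -r⁻¹) := by
    nth_rewrite 1 [hfact2]
    rw [roots_C_mul _ (mul_pos hc0 htprodpos).ne', ← hmapeq2, roots_multiset_prod_X_sub_C]
  have hinv : t.map (·⁻¹) = t := by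
    have h := rootsA.symm.trans rootsB
    have h2 := congrArg (Multiset.map (fun x : ℝ => -x)) h
    simp only [Multiset.map_map, Function.comp, neg_neg] at h2
    simp only [Multiset.map_id'] at h2
    exact h2.symm
  obtain ⟨γ, hγ0, _, heq⟩ := my_key n t htcard f.leadingCoeff hc0.le htpos hinv
  exact ⟨γ, hγ0, by rw [hfact, heq]⟩
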